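/- Let p : E → Q be a surjective group homomorphism with kernel K and let c be a natural number. Suppose the extension 1 → K → E → Q → 1 is flat for the lower central series quotient at stage c, i.e., the image of the lower central series subgroup Γ_c(K) under the inclusion K → E equals K ∩ Γ_c(E). Then for every group homomorphism f : X → Q, the pullback extension has the same property: letting P = {(e,x) ∈ E × X : p(e) = f(x)} with projection π : P → X (which is surjective with kernel K' = {(k,1) : k ∈ K}), the image of Γ_c(K') under the inclusion K' → P equals K' ∩ Γ_c(P). In other words, the functor sending a group G to its nilpotent quotient G/Γ_c(G) is conditionally flat. -/

import Mathlib

/-- The pullback (fiber product) of two homomorphisms `p : E →* G` and `f : X →* G`,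
as a subgroup of `E × X`. -/
def pullbackSubgroup {E X G : Type*} [Group E] [Group X] [Group G]
    (p : E →* G) (f : X →* G) : Subgroup (E × X) where
  carrier := {q : E × X | p q.1 = f q.2}
  one_mem' := by simp
  mul_mem' := by
    intro a b ha hb
    simp only [Set.mem_setOf_eq, Prod.fst_mul, Prod.snd_mul, map_mul] at *
    rw [ha, hb]
  inv_mem' := by
    intro a ha
    simp only [Set.mem_setOf_eq, Prod.fst_inv, Prod.snd_inv, map_inv] at *
    rw [ha]

/-- The projection from the pullback of `p : E →* G` along `f : X →* G` to `X`. -/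
def pullbackProj {E X G : Type*} [Group E] [Group X] [Group G]
    (p : E →* G) (f : X →* G) : ↥(pullbackSubgroup p f) →* X :=
  (MonoidHom.snd E X).comp (pullbackSubgroup p f).subtype

/-- An isomorphism maps the lower central series onto the lower central series. -/
lemma lowerCentralSeries_map_mulEquiv {G H : Type*} [Group G] [Group H]
    (e : G ≃* H) (n : ℕ) :
    ((⊤ : Subgroup G).lowerCentralSeries n).map e.toMonoidHom = (⊤ : Subgroup H).lowerCentralSeries n := by
  refine le_antisymm (lowerCentralSeries.map _ n) ?_
  intro h hh
  refine ⟨e.symm h, ?_, by simp⟩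
  have := lowerCentralSeries.map e.symm.toMonoidHom n ⟨h, hh, rfl⟩
  exact this

section
variable {E Q X : Type*} [Group E] [Group Q] [Group X] (p : E →* Q) (f : X →* Q)

/-- The map `K → P`, `k ↦ (k, 1)`, into the pullback. -/
def kerToPullback : ↥(MonoidHom.ker p) →* ↥(pullbackSubgroup p f) where
  toFun k := ⟨(k.1, 1), show p k.1 = f 1 by rw [map_one]; exact k.2⟩
  map_one' := rfl
  map_mul' a b := by ext <;> simp

lemma kerToPullback_mem_ker (k : ↥(MonoidHom.ker p)) :
    kerToPullback p f k ∈ MonoidHom.ker (pullbackProj p f) := rfl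

/-- The isomorphism `K ≃* ker π`. -/
def kerEquiv : ↥(MonoidHom.ker p) ≃* ↥(MonoidHom.ker (pullbackProj p f)) where
  toFun k := ⟨kerToPullback p f k, kerToPullback_mem_ker p f k⟩
  invFun q := ⟨q.1.1.1, by
    have h2 : q.1.1.2 = 1 := q.2
    have := q.1.2
    change p q.1.1.1 = f q.1.1.2 at this
    rw [h2, map_one] at this
    exact this⟩
  left_inv k := rfl
  right_inv q := by
    have h2 : q.1.1.2 = 1 := q.2
    ext
    · rfl
    · exact h2.symm
  map_mul' a b := by ext <;> simp [kerToPullback]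

end

theorem lowerCentralSeries_conditionally_flat (c : ℕ)
    {E Q X : Type*} [Group E] [Group Q] [Group X]
    (p : E →* Q) (hp : Function.Surjective p)
    (hflat : ((⊤ : Subgroup ↥(MonoidHom.ker p)).lowerCentralSeries c).map (MonoidHom.ker p).subtype =
      MonoidHom.ker p ⊓ (⊤ : Subgroup E).lowerCentralSeries c)
    (f : X →* Q) :
    ((⊤ : Subgroup ↥(MonoidHom.ker (pullbackProj p f))).lowerCentralSeries c).map
        (MonoidHom.ker (pullbackProj p f)).subtype =
      MonoidHom.ker (pullbackProj p f) ⊓ (⊤ : Subgroup ↥(pullbackSubgroup p f)).lowerCentralSeries c := by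
  set K := MonoidHom.ker p
  set P := pullbackSubgroup p f
  set K' := MonoidHom.ker (pullbackProj p f)
  have hK' : ((⊤ : Subgroup ↥K').lowerCentralSeries c) =
      ((⊤ : Subgroup ↥K).lowerCentralSeries c).map (kerEquiv p f).toMonoidHom :=
    (lowerCentralSeries_map_mulEquiv (kerEquiv p f) c).symm
  apply le_antisymm
  · intro q hq
    obtain ⟨k', hk', rfl⟩ := hq
    refine ⟨k'.2, ?_⟩
    exact lowerCentralSeries_map_subtype_le K' c ⟨k', hk', rfl⟩
  · rintro q ⟨hq1, hq2⟩
    -- q.1.2 = 1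
    have h2 : q.1.2 = 1 := hq1
    have hqE : q.1.1 ∈ K ⊓ (⊤ : Subgroup E).lowerCentralSeries c := by
      constructor
      · have := q.2
        change p q.1.1 = f q.1.2 at this
        rw [h2, map_one] at this
        exact this
      · exact lowerCentralSeries.map ((MonoidHom.fst E X).comp P.subtype) c ⟨q, hq2, rfl⟩
    rw [← hflat] at hqE
    obtain ⟨k, hk, hkq⟩ := hqE
    refine ⟨⟨kerToPullback p f k, kerToPullback_mem_ker p f k⟩, ?_, ?_⟩
    · rw [hK']
      exact ⟨k, hk, rfl⟩
    · ext
      · exact hkq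
      · exact h2.symm
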